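/- Let E ≅ E_u be a finite MV-effect algebra (a finite product of finite chains, coordinatized as the interval [0,u] ⊆ ℤ^r for u with positive entries). Then E admits a total binary operation satisfying (S1)–(S4) if and only if all u_i = 1, i.e., if and only if E is a Boolean algebra. -/

import Mathlib

/-- The simplicial interval effect algebra `E_u = [0, u] ⊆ ℤ^r`, with
`x ⊕ y = x + y` defined whenever `x + y ≤ u` componentwise. -/
def Eu {r : ℕ} (u : Fin r → ℤ) : Type := {x : Fin r → ℤ // 0 ≤ x ∧ x ≤ u}

/-- A map `L : E_u → E_v` is additive: `L (x ⊕ y) = L x ⊕ L y` whenever `x + y ≤ u`,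
i.e. whenever `x + y` is again an element `z` of `E_u`. -/
def AdditiveMap {r s : ℕ} (u : Fin r → ℤ) (v : Fin s → ℤ)
    (L : Eu u → Eu v) : Prop :=
  ∀ x y z : Eu u, x.val + y.val = z.val → (L z).val = (L x).val + (L y).val

/-- (S1) for a binary operation on `E_u`: every left translation is additive. -/
def EuS1 {r : ℕ} (u : Fin r → ℤ) (op : Eu u → Eu u → Eu u) : Prop :=
  ∀ a : Eu u, AdditiveMap u u (op a)

/-- (S3) for a binary operation on `E_u`: `a ∘ b = 0` implies `b ∘ a = 0`. -/
def EuS3 {r : ℕ} (u : Fin r → ℤ) (op : Eu u → Eu u → Eu u) : Prop :=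
  ∀ a b : Eu u, (op a b).val = 0 → (op b a).val = 0

/-- (S4) on `E_u` (orthosupplement `b' = u - b`): if `a ∘ b = b ∘ a` then
`a ∘ b' = b' ∘ a` and `a ∘ (b ∘ c) = (a ∘ b) ∘ c`. -/
def EuS4 {r : ℕ} (u : Fin r → ℤ) (op : Eu u → Eu u → Eu u) : Prop :=
  ∀ a b : Eu u, op a b = op b a →
    (∀ b' : Eu u, b'.val = u - b.val → op a b' = op b' a) ∧
    (∀ c : Eu u, op a (op b c) = op (op a b) c)

namespace EuThm

variable {r : ℕ}

/-- Constructor for elements of `Eu u` from pointwise bounds. -/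
def mkEu (u : Fin r → ℤ) (f : Fin r → ℤ) (h1 : ∀ j, 0 ≤ f j) (h2 : ∀ j, f j ≤ u j) :
    Eu u :=
  ⟨f, fun j => h1 j, fun j => h2 j⟩

@[simp] lemma mkEu_val (u : Fin r → ℤ) (f : Fin r → ℤ) (h1 h2) (j : Fin r) :
    (mkEu u f h1 h2).val j = f j := rfl

lemma val_nonneg {u : Fin r → ℤ} (x : Eu u) (j : Fin r) : 0 ≤ x.val j := x.2.1 j
lemma val_le {u : Fin r → ℤ} (x : Eu u) (j : Fin r) : x.val j ≤ u j := x.2.2 j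

/-- The atom `e i`. -/
def atom (u : Fin r → ℤ) (hu : ∀ i, 1 ≤ u i) (i : Fin r) : Eu u :=
  mkEu u (fun j => if j = i then 1 else 0)
    (fun j => by split <;> omega)
    (fun j => by have := hu j; split <;> omega)

@[simp] lemma atom_val (u : Fin r → ℤ) (hu : ∀ i, 1 ≤ u i) (i j : Fin r) :
    (atom u hu i).val j = if j = i then 1 else 0 := rfl

/-- The zero element. -/
def zeroEu (u : Fin r → ℤ) (hu : ∀ i, 1 ≤ u i) : Eu u :=
  mkEu u (fun _ => 0) (fun _ => le_rfl) (fun j => by have := hu j; omega)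

@[simp] lemma zeroEu_val (u : Fin r → ℤ) (hu : ∀ i, 1 ≤ u i) (j : Fin r) :
    (zeroEu u hu).val j = 0 := rfl

/-- The complement `u - b`. -/
def subEl (u : Fin r → ℤ) (b : Eu u) : Eu u :=
  mkEu u (fun k => u k - b.val k)
    (fun k => by have := val_le b k; omega)
    (fun k => by have := val_nonneg b k; omega)

@[simp] lemma subEl_val (u : Fin r → ℤ) (b : Eu u) (k : Fin r) :
    (subEl u b).val k = u k - b.val k := rfl

/-- The element `k • e_i` for `k ≤ u i`. -/
def scaleEl (u : Fin r → ℤ) (i : Fin r) (k : ℤ) (h0 : 0 ≤ k) (hk : k ≤ u i)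
    (hu : ∀ i, 1 ≤ u i) : Eu u :=
  mkEu u (fun j => if j = i then k else 0)
    (fun j => by split <;> omega)
    (fun j => by have := hu j; split
                 · rename_i h; rw [h]; exact hk
                 · omega)

@[simp] lemma scaleEl_val (u : Fin r → ℤ) (i : Fin r) (k : ℤ) (h0 hk hu) (j : Fin r) :
    (scaleEl u i k h0 hk hu).val j = if j = i then k else 0 := rfl

/-- Decrement `x` by one in coordinate `j`. -/
def decEl (u : Fin r → ℤ) (x : Eu u) (j : Fin r) (hj : 1 ≤ x.val j) : Eu u :=
  mkEu u (fun k => x.val k - if k = j then 1 else 0)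
    (fun k => by have := val_nonneg x k; split
                 · rename_i h; rw [h]; omega
                 · omega)
    (fun k => by have := val_le x k; split <;> omega)

@[simp] lemma decEl_val (u : Fin r → ℤ) (x : Eu u) (j : Fin r) (hj) (k : Fin r) :
    (decEl u x j hj).val k = x.val k - if k = j then 1 else 0 := rfl

section forward

variable {u : Fin r → ℤ} {op : Eu u → Eu u → Eu u} {t : Eu u}

/-- If `x.val = 0` then `op a x = 0`. -/
lemma op_zero (hS1 : EuS1 u op) (a x : Eu u) (hx : x.val = 0) : (op a x).val = 0 := by
  have h := hS1 a x x x (by rw [hx]; funext j; simp)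
  funext j
  have hj := congrFun h j
  simp only [Pi.add_apply] at hj
  have h0 := val_nonneg (op a x) j
  simp only [Pi.zero_apply]
  omega

/-- `op a t = a`. -/
lemma op_top (hu : ∀ i, 1 ≤ u i) (ht : t.val = u)
    (hS1 : EuS1 u op) (hS2 : ∀ x : Eu u, op t x = x) (hS3 : EuS3 u op)
    (hS4 : EuS4 u op) (a : Eu u) : op a t = a := by
  have h0 : (op a (zeroEu u hu)).val = 0 := op_zero hS1 a _ (by funext j; simp)
  have h0' : (op (zeroEu u hu) a).val = 0 := hS3 a _ h0
  have hcomm : op a (zeroEu u hu) = op (zeroEu u hu) a := Subtype.ext (h0.trans h0'.symm)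
  have h4 := (hS4 a (zeroEu u hu) hcomm).1 t (by rw [ht]; funext j; simp)
  rw [h4, hS2 a]

/-- `op a b ≤ a` pointwise. -/
lemma op_le (hu : ∀ i, 1 ≤ u i) (ht : t.val = u)
    (hS1 : EuS1 u op) (hS2 : ∀ x : Eu u, op t x = x) (hS3 : EuS3 u op)
    (hS4 : EuS4 u op) (a b : Eu u) (j : Fin r) : (op a b).val j ≤ a.val j := by
  have hadd := hS1 a b (subEl u b) t (by rw [ht]; funext k; simp)
  rw [op_top hu ht hS1 hS2 hS3 hS4 a] at hadd
  have hj := congrFun hadd j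
  simp only [Pi.add_apply] at hj
  have h0 := val_nonneg (op a (subEl u b)) j
  omega

/-- Scaling: `op a (k • e_i) = k • op a e_i`. -/
lemma op_scale (hu : ∀ i, 1 ≤ u i) (hS1 : EuS1 u op) (a : Eu u) (i : Fin r) :
    ∀ (k : ℕ), (k : ℤ) ≤ u i → ∀ z : Eu u,
      (∀ j, z.val j = if j = i then (k : ℤ) else 0) →
      ∀ j, (op a z).val j = (k : ℤ) * (op a (atom u hu i)).val j := by
  intro k
  induction k with
  | zero =>
    intro _ z hz j
    have hz0 : (op a z).val = 0 :=
      op_zero hS1 a z (by funext j; have := hz j; simpa using this)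
    rw [hz0]; simp
  | succ k ih =>
    intro hk z hz j
    have hk' : (k : ℤ) ≤ u i := by push_cast at hk ⊢; omega
    have hadd := hS1 a (scaleEl u i (k : ℤ) (by positivity) hk' hu) (atom u hu i) z
      (by funext m
          simp only [Pi.add_apply, scaleEl_val, atom_val, hz m]
          by_cases hmi : m = i
          · rw [if_pos hmi, if_pos hmi, if_pos hmi]; push_cast; ring
          · rw [if_neg hmi, if_neg hmi, if_neg hmi]; ring)
    have hj := congrFun hadd j
    simp only [Pi.add_apply] at hj
    rw [hj, ih hk' (scaleEl u i (k : ℤ) (by positivity) hk' hu) (fun m => rfl) j]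
    push_cast; ring

/-- If `op a e_j = 0` for all atoms, then `op a x = 0` for all `x`. -/
lemma op_vanish (hu : ∀ i, 1 ≤ u i) (hS1 : EuS1 u op) (a : Eu u)
    (h0 : ∀ j, (op a (atom u hu j)).val = 0) :
    ∀ (n : ℕ) (x : Eu u), (∑ j, (x.val j).toNat) = n → (op a x).val = 0 := by
  intro n
  induction n using Nat.strong_induction_on with
  | _ n ih =>
    intro x hx
    by_cases hxz : x.val = 0
    · exact op_zero hS1 a x hxz
    · obtain ⟨j, hj⟩ := Function.ne_iff.mp hxz
      simp only [Pi.zero_apply] at hj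
      have hj1 : 1 ≤ x.val j := by have := val_nonneg x j; omega
      have hadd := hS1 a (atom u hu j) (decEl u x j hj1) x (by
        funext k
        simp only [Pi.add_apply, atom_val, decEl_val]
        ring)
      have hsum : (∑ k, ((decEl u x j hj1).val k).toNat) + 1 = ∑ k, (x.val k).toNat := by
        rw [Fintype.sum_eq_add_sum_compl j (fun k => ((decEl u x j hj1).val k).toNat),
            Fintype.sum_eq_add_sum_compl j (fun k => (x.val k).toNat)]
        have hrest : ∑ k ∈ ({j} : Finset (Fin r))ᶜ, ((decEl u x j hj1).val k).toNat
            = ∑ k ∈ ({j} : Finset (Fin r))ᶜ, (x.val k).toNat := by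
          refine Finset.sum_congr rfl (fun k hk => ?_)
          have hkj : k ≠ j := by simpa using hk
          simp [hkj]
        rw [hrest]
        have hd : (decEl u x j hj1).val j = x.val j - 1 := by simp
        rw [hd]
        omega
      have hyv : (op a (decEl u x j hj1)).val = 0 := by
        refine ih (n - 1) (by omega) _ (by omega)
      rw [hadd, h0 j, hyv]; simp
    
lemma forward_step (hu : ∀ i, 1 ≤ u i) (ht : t.val = u)
    (hS1 : EuS1 u op) (hS2 : ∀ x : Eu u, op t x = x) (hS3 : EuS3 u op)
    (hS4 : EuS4 u op) (i : Fin r) : u i = 1 := by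
  have hui : (1:ℤ) ≤ u i := hu i
  have hcast : (((u i).toNat : ℕ) : ℤ) = u i := Int.toNat_of_nonneg (by omega)
  have hz0 : (0:ℤ) ≤ (((u i).toNat : ℕ) : ℤ) := by positivity
  have hzu : (((u i).toNat : ℕ) : ℤ) ≤ u i := le_of_eq hcast
  set z : Eu u := scaleEl u i (((u i).toNat : ℕ) : ℤ) hz0 hzu hu with hzdef
  have hzval : ∀ j, z.val j = if j = i then (((u i).toNat : ℕ) : ℤ) else 0 :=
    fun j => rfl
  by_cases hc : 1 ≤ (op (atom u hu i) (atom u hu i)).val i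
  · -- op e_i e_i has a 1 in coordinate i
    have hs := op_scale hu hS1 (atom u hu i) i (u i).toNat hzu z hzval i
    have hb := op_le hu ht hS1 hS2 hS3 hS4 (atom u hu i) z i
    have hb1 : (op (atom u hu i) z).val i ≤ 1 := by simpa using hb
    have hmul : (((u i).toNat : ℕ) : ℤ) ≤
        (((u i).toNat : ℕ) : ℤ) * (op (atom u hu i) (atom u hu i)).val i :=
      le_mul_of_one_le_right hz0 hc
    linarith [hs, hb1, hmul, hcast, hui]
  · -- op e_i e_i = 0; find another atom j with op e_i e_j ≠ 0
    have heizero : (op (atom u hu i) (atom u hu i)).val = 0 := by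
      funext k
      have h1 := val_nonneg (op (atom u hu i) (atom u hu i)) k
      have h2 := op_le hu ht hS1 hS2 hS3 hS4 (atom u hu i) (atom u hu i) k
      simp only [atom_val] at h2
      simp only [Pi.zero_apply]
      by_cases hk : k = i
      · subst hk; rw [if_pos rfl] at h2; omega
      · rw [if_neg hk] at h2; omega
    have hne : ¬ ∀ j, (op (atom u hu i) (atom u hu j)).val = 0 := by
      intro hall
      have hv := op_vanish hu hS1 (atom u hu i) hall (∑ j, (t.val j).toNat) t rfl
      rw [op_top hu ht hS1 hS2 hS3 hS4 (atom u hu i)] at hv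
      have hvi := congrFun hv i
      simp at hvi
    push_neg at hne
    obtain ⟨j, hj⟩ := hne
    have hji : (op (atom u hu j) (atom u hu i)).val ≠ 0 := fun h => hj (hS3 _ _ h)
    have hjj : 1 ≤ (op (atom u hu j) (atom u hu i)).val j := by
      by_contra h
      push_neg at h
      apply hji
      funext k
      have h1 := val_nonneg (op (atom u hu j) (atom u hu i)) k
      have h2 := op_le hu ht hS1 hS2 hS3 hS4 (atom u hu j) (atom u hu i) k
      simp only [atom_val] at h2
      simp only [Pi.zero_apply]
      by_cases hk : k = j
      · subst hk; omega
      · rw [if_neg hk] at h2; omega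
    have hs := op_scale hu hS1 (atom u hu j) i (u i).toNat hzu z hzval j
    have hb := op_le hu ht hS1 hS2 hS3 hS4 (atom u hu j) z j
    have hb1 : (op (atom u hu j) z).val j ≤ 1 := by simpa using hb
    have hmul : (((u i).toNat : ℕ) : ℤ) ≤
        (((u i).toNat : ℕ) : ℤ) * (op (atom u hu j) (atom u hu i)).val j :=
      le_mul_of_one_le_right hz0 hjj
    linarith [hs, hb1, hmul, hcast, hui]

end forward

end EuThm

/-- threshold theorem for finite MV-effect algebras. The simplicial
interval `E_u` admits a total binary operation satisfying (S1)-(S4) iff all `u_i = 1`,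
i.e. iff `E_u` is a Boolean algebra. -/
theorem Eu_S1S4_iff_boolean {r : ℕ} (u : Fin r → ℤ) (hu : ∀ i, 1 ≤ u i)
    (t : Eu u) (ht : t.val = u) :
    (∃ op : Eu u → Eu u → Eu u,
        EuS1 u op ∧ (∀ x : Eu u, op t x = x) ∧ EuS3 u op ∧ EuS4 u op) ↔
      ∀ i, u i = 1 := by
  constructor
  · rintro ⟨op, hS1, hS2, hS3, hS4⟩ i
    exact EuThm.forward_step hu ht hS1 hS2 hS3 hS4 i
  · intro h1
    refine ⟨fun a b => EuThm.mkEu u (fun j => min (a.val j) (b.val j))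
      (fun j => le_min (EuThm.val_nonneg a j) (EuThm.val_nonneg b j))
      (fun j => (min_le_left _ _).trans (EuThm.val_le a j)), ?_, ?_, ?_, ?_⟩
    · intro a x y z hxyz
      funext j
      have hj := congrFun hxyz j
      simp only [Pi.add_apply] at hj ⊢
      simp only [EuThm.mkEu_val]
      have ha1 := EuThm.val_le a j
      have ha0 := EuThm.val_nonneg a j
      have hx0 := EuThm.val_nonneg x j
      have hy0 := EuThm.val_nonneg y j
      have hz1 := EuThm.val_le z j
      rw [h1 j] at ha1 hz1
      omega
    · intro x
      apply Subtype.ext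
      funext j
      simp only [EuThm.mkEu_val]
      rw [ht]
      exact min_eq_right (EuThm.val_le x j)
    · intro a b h
      funext j
      have hj := congrFun h j
      simp only [EuThm.mkEu_val, Pi.zero_apply] at hj ⊢
      omega
    · intro a b _
      refine ⟨fun b' _ => ?_, fun c => ?_⟩
      · apply Subtype.ext; funext j; simp only [EuThm.mkEu_val]; omega
      · apply Subtype.ext; funext j; simp only [EuThm.mkEu_val]; omega
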